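/- Suppose g12 ≥ g22 μ-almost everywhere and g21 ≥ g11 μ-almost everywhere (uniformly strong IFC). Then for every power-split policy (α1, α2), min over j ∈ {1,...,6} of S_j(α,p) ≤ min over j ∈ {1,...,6} of S_j(0,p) = min(S1(0,p), S2(0,p), S3(0,p)). That is, the Han–Kobayashi sum-rate bound with joint coding across all fading states is maximized by transmitting only common messages at both users. -/

import Mathlib

open MeasureTheory

/-- `C(x) = log₂(1+x)`. -/
noncomputable def C (x : ℝ) : ℝ := Real.logb 2 (1 + x)

variable {Ω : Type*} [MeasurableSpace Ω]

/-- Han–Kobayashi sum-rate bound `S1(α,p)` (sum of the two individual-rate bounds). -/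
noncomputable def S1 (μ : Measure Ω) (g11 g12 g21 g22 p1 p2 a1 a2 : Ω → ℝ) : ℝ :=
  (∫ ω, C (g11 ω * p1 ω / (1 + a2 ω * g12 ω * p2 ω)) ∂μ)
    + ∫ ω, C (g22 ω * p2 ω / (1 + a1 ω * g21 ω * p1 ω)) ∂μ

/-- Han–Kobayashi sum-rate bound `S2(α,p)`. -/
noncomputable def S2 (μ : Measure Ω) (g11 g12 g21 g22 p1 p2 a1 a2 : Ω → ℝ) : ℝ :=
  (∫ ω, C ((g11 ω * p1 ω + (1 - a2 ω) * g12 ω * p2 ω) / (1 + a2 ω * g12 ω * p2 ω)) ∂μ)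
    + ∫ ω, C (a2 ω * g22 ω * p2 ω / (1 + a1 ω * g21 ω * p1 ω)) ∂μ

/-- Han–Kobayashi sum-rate bound `S3(α,p)`: `S2` with the roles of the two users swapped. -/
noncomputable def S3 (μ : Measure Ω) (g11 g12 g21 g22 p1 p2 a1 a2 : Ω → ℝ) : ℝ :=
  S2 μ g22 g21 g12 g11 p2 p1 a2 a1

/-- Han–Kobayashi sum-rate bound `S4(α,p)`. -/
noncomputable def S4 (μ : Measure Ω) (g11 g12 g21 g22 p1 p2 a1 a2 : Ω → ℝ) : ℝ :=
  (∫ ω, C ((a1 ω * g11 ω * p1 ω + (1 - a2 ω) * g12 ω * p2 ω) / (1 + a2 ω * g12 ω * p2 ω)) ∂μ)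
    + ∫ ω, C ((a2 ω * g22 ω * p2 ω + (1 - a1 ω) * g21 ω * p1 ω) / (1 + a1 ω * g21 ω * p1 ω)) ∂μ

/-- Han–Kobayashi sum-rate bound `S5(α,p)` (the `2R1 + R2` bound combined with `R2`). -/
noncomputable def S5 (μ : Measure Ω) (g11 g12 g21 g22 p1 p2 a1 a2 : Ω → ℝ) : ℝ :=
  ((∫ ω, C ((g11 ω * p1 ω + (1 - a2 ω) * g12 ω * p2 ω) / (1 + a2 ω * g12 ω * p2 ω)) ∂μ)
    + (∫ ω, C (a1 ω * g11 ω * p1 ω / (1 + a2 ω * g12 ω * p2 ω)) ∂μ)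
    + (∫ ω, C ((a2 ω * g22 ω * p2 ω + (1 - a1 ω) * g21 ω * p1 ω) / (1 + a1 ω * g21 ω * p1 ω)) ∂μ)
    + ∫ ω, C (g22 ω * p2 ω / (1 + a1 ω * g21 ω * p1 ω)) ∂μ) / 2

/-- Han–Kobayashi sum-rate bound `S6(α,p)`: `S5` with the roles of the two users swapped. -/
noncomputable def S6 (μ : Measure Ω) (g11 g12 g21 g22 p1 p2 a1 a2 : Ω → ℝ) : ℝ :=
  S5 μ g22 g21 g12 g11 p2 p1 a2 a1

/-- The Han–Kobayashi sum-rate bound: `min` over `j ∈ {1,…,6}` of `S_j(α,p)`. -/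
noncomputable def minS (μ : Measure Ω) (g11 g12 g21 g22 p1 p2 a1 a2 : Ω → ℝ) : ℝ :=
  min (S1 μ g11 g12 g21 g22 p1 p2 a1 a2)
    (min (S2 μ g11 g12 g21 g22 p1 p2 a1 a2)
      (min (S3 μ g11 g12 g21 g22 p1 p2 a1 a2)
        (min (S4 μ g11 g12 g21 g22 p1 p2 a1 a2)
          (min (S5 μ g11 g12 g21 g22 p1 p2 a1 a2) (S6 μ g11 g12 g21 g22 p1 p2 a1 a2)))))

lemma C_zero : C 0 = 0 := by simp [C]

lemma C_nonneg {x : ℝ} (h : 0 ≤ x) : 0 ≤ C x :=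
  Real.logb_nonneg one_lt_two (by linarith)

lemma C_mono {x y : ℝ} (hx : 0 ≤ x) (h : x ≤ y) : C x ≤ C y :=
  Real.logb_le_logb_of_le one_lt_two (by linarith) (by linarith)

lemma C_add_le {x y z : ℝ} (hx : 0 ≤ x) (hy : 0 ≤ y)
    (h : (1 + x) * (1 + y) ≤ 1 + z) : C x + C y ≤ C z := by
  have hx1 : (0:ℝ) < 1 + x := by linarith
  have hy1 : (0:ℝ) < 1 + y := by linarith
  unfold C
  rw [← Real.logb_mul (ne_of_gt hx1) (ne_of_gt hy1)]
  exact Real.logb_le_logb_of_le one_lt_two (by positivity) h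

lemma measurable_C : Measurable C := by
  unfold C Real.logb
  exact (Real.measurable_log.comp (measurable_const.add measurable_id)).div_const _

lemma integrable_C_of_le {μ : Measure Ω} {f g : Ω → ℝ}
    (hf : AEMeasurable f μ) (h0 : ∀ᵐ ω ∂μ, 0 ≤ f ω) (hle : ∀ᵐ ω ∂μ, f ω ≤ g ω)
    (hg : Integrable (fun ω => C (g ω)) μ) : Integrable (fun ω => C (f ω)) μ := by
  refine hg.mono' (measurable_C.comp_aemeasurable hf).aestronglyMeasurable ?_
  filter_upwards [h0, hle] with ω h0 hle
  rw [Real.norm_eq_abs, abs_of_nonneg (C_nonneg h0)]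
  exact C_mono h0 hle

lemma int_C_mono {μ : Measure Ω} {f g : Ω → ℝ}
    (h0 : ∀ᵐ ω ∂μ, 0 ≤ f ω) (hle : ∀ᵐ ω ∂μ, f ω ≤ g ω)
    (hI : Integrable (fun ω => C (g ω)) μ) :
    ∫ ω, C (f ω) ∂μ ≤ ∫ ω, C (g ω) ∂μ := by
  refine integral_mono_of_nonneg ?_ hI ?_
  · filter_upwards [h0] with ω h0; exact C_nonneg h0
  · filter_upwards [h0, hle] with ω h0 hle; exact C_mono h0 hle

lemma int_C_shrink {μ : Measure Ω} {f d : Ω → ℝ}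
    (h0 : ∀ ω, 0 ≤ f ω) (hd : ∀ ω, 0 ≤ d ω)
    (hI : Integrable (fun ω => C (f ω)) μ) :
    ∫ ω, C (f ω / (1 + d ω)) ∂μ ≤ ∫ ω, C (f ω) ∂μ := by
  refine int_C_mono (ae_of_all _ fun ω => ?_) (ae_of_all _ fun ω => ?_) hI
  · exact div_nonneg (h0 ω) (by linarith [hd ω])
  · exact div_le_self (h0 ω) (by linarith [hd ω])

lemma S2_le (μ : Measure Ω) (g11 g12 g21 g22 p1 p2 : Ω → ℝ)
    (hg11 : Measurable g11) (hg12 : Measurable g12)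
    (hg21 : Measurable g21) (hg22 : Measurable g22)
    (hp1 : Measurable p1) (hp2 : Measurable p2)
    (hg11n : ∀ ω, 0 ≤ g11 ω) (hg12n : ∀ ω, 0 ≤ g12 ω)
    (hg21n : ∀ ω, 0 ≤ g21 ω) (hg22n : ∀ ω, 0 ≤ g22 ω)
    (hp1n : ∀ ω, 0 ≤ p1 ω) (hp2n : ∀ ω, 0 ≤ p2 ω)
    (hUS : ∀ᵐ ω ∂μ, g22 ω ≤ g12 ω)
    (hI : Integrable (fun ω => C (g11 ω * p1 ω + g12 ω * p2 ω)) μ)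
    (a1 a2 : Ω → ℝ) (ha1 : Measurable a1) (ha2 : Measurable a2)
    (ha1r : ∀ ω, a1 ω ∈ Set.Icc (0 : ℝ) 1) (ha2r : ∀ ω, a2 ω ∈ Set.Icc (0 : ℝ) 1) :
    S2 μ g11 g12 g21 g22 p1 p2 a1 a2 ≤ S2 μ g11 g12 g21 g22 p1 p2 0 0 := by
  have h00 : S2 μ g11 g12 g21 g22 p1 p2 0 0
      = ∫ ω, C (g11 ω * p1 ω + g12 ω * p2 ω) ∂μ := by
    simp [S2, C_zero]
  set f1 : Ω → ℝ := fun ω =>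
    C ((g11 ω * p1 ω + (1 - a2 ω) * g12 ω * p2 ω) / (1 + a2 ω * g12 ω * p2 ω)) with hf1
  set f2 : Ω → ℝ := fun ω =>
    C (a2 ω * g22 ω * p2 ω / (1 + a1 ω * g21 ω * p1 ω)) with hf2
  have hd2 : ∀ ω, (0:ℝ) < 1 + a2 ω * g12 ω * p2 ω := fun ω => by
    have := mul_nonneg (mul_nonneg (ha2r ω).1 (hg12n ω)) (hp2n ω); linarith
  have hd1 : ∀ ω, (0:ℝ) < 1 + a1 ω * g21 ω * p1 ω := fun ω => by
    have := mul_nonneg (mul_nonneg (ha1r ω).1 (hg21n ω)) (hp1n ω); linarith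
  have hn1 : ∀ ω, (0:ℝ) ≤ (g11 ω * p1 ω + (1 - a2 ω) * g12 ω * p2 ω) := fun ω => by
    have h12 : (0:ℝ) ≤ 1 - a2 ω := by linarith [(ha2r ω).2]
    have := mul_nonneg (mul_nonneg h12 (hg12n ω)) (hp2n ω)
    have := mul_nonneg (hg11n ω) (hp1n ω)
    linarith
  have hn2 : ∀ ω, (0:ℝ) ≤ a2 ω * g22 ω * p2 ω := fun ω =>
    mul_nonneg (mul_nonneg (ha2r ω).1 (hg22n ω)) (hp2n ω)
  have hi1 : Integrable f1 μ := by
    refine integrable_C_of_le (f := fun ω =>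
        (g11 ω * p1 ω + (1 - a2 ω) * g12 ω * p2 ω) / (1 + a2 ω * g12 ω * p2 ω))
      ?_ (ae_of_all _ fun ω => div_nonneg (hn1 ω) (hd2 ω).le)
      (ae_of_all _ fun ω => ?_) hI
    · fun_prop
    · have h1 : (g11 ω * p1 ω + (1 - a2 ω) * g12 ω * p2 ω) / (1 + a2 ω * g12 ω * p2 ω)
          ≤ g11 ω * p1 ω + (1 - a2 ω) * g12 ω * p2 ω :=
        div_le_self (hn1 ω)
          (le_add_of_nonneg_right (mul_nonneg (mul_nonneg (ha2r ω).1 (hg12n ω)) (hp2n ω)))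
      have h2 : (1 - a2 ω) * g12 ω * p2 ω ≤ g12 ω * p2 ω := by
        nlinarith [mul_nonneg (hg12n ω) (hp2n ω), (ha2r ω).1, (ha2r ω).2,
          mul_nonneg (mul_nonneg (ha2r ω).1 (hg12n ω)) (hp2n ω)]
      linarith
  have hi2 : Integrable f2 μ := by
    refine integrable_C_of_le (f := fun ω =>
        a2 ω * g22 ω * p2 ω / (1 + a1 ω * g21 ω * p1 ω))
      ?_ (ae_of_all _ fun ω => div_nonneg (hn2 ω) (hd1 ω).le) ?_ hI
    · fun_prop
    · filter_upwards [hUS] with ω hω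
      have h1 : a2 ω * g22 ω * p2 ω / (1 + a1 ω * g21 ω * p1 ω) ≤ a2 ω * g22 ω * p2 ω :=
        div_le_self (hn2 ω)
          (le_add_of_nonneg_right (mul_nonneg (mul_nonneg (ha1r ω).1 (hg21n ω)) (hp1n ω)))
      have h2 : a2 ω * g22 ω * p2 ω ≤ g12 ω * p2 ω := by
        nlinarith [(ha2r ω).1, (ha2r ω).2, hp2n ω, hg22n ω,
          mul_le_mul_of_nonneg_right hω (hp2n ω),
          mul_nonneg (hg22n ω) (hp2n ω)]
      have h3 : (0:ℝ) ≤ g11 ω * p1 ω := mul_nonneg (hg11n ω) (hp1n ω)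
      linarith
  rw [h00]
  show (∫ ω, f1 ω ∂μ) + ∫ ω, f2 ω ∂μ ≤ _
  rw [← integral_add hi1 hi2]
  refine integral_mono_ae (hi1.add hi2) hI ?_
  filter_upwards [hUS] with ω hω
  simp only [Pi.add_apply, hf1, hf2]
  have hYV : g22 ω * p2 ω ≤ g12 ω * p2 ω := mul_le_mul_of_nonneg_right hω (hp2n ω)
  have hD2 := hd2 ω
  have hD1 := hd1 ω
  refine C_add_le (div_nonneg (hn1 ω) hD2.le) (div_nonneg (hn2 ω) hD1.le) ?_
  have e1 : 1 + (g11 ω * p1 ω + (1 - a2 ω) * g12 ω * p2 ω) / (1 + a2 ω * g12 ω * p2 ω)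
      = (1 + g11 ω * p1 ω + g12 ω * p2 ω) / (1 + a2 ω * g12 ω * p2 ω) := by
    field_simp
    ring
  have e2 : 1 + a2 ω * g22 ω * p2 ω / (1 + a1 ω * g21 ω * p1 ω)
      = (1 + a1 ω * g21 ω * p1 ω + a2 ω * g22 ω * p2 ω) / (1 + a1 ω * g21 ω * p1 ω) := by
    field_simp
  rw [e1, e2, div_mul_div_comm, div_le_iff₀ (by positivity)]
  have hsub : 1 + a1 ω * g21 ω * p1 ω + a2 ω * g22 ω * p2 ω
      ≤ (1 + a2 ω * g12 ω * p2 ω) * (1 + a1 ω * g21 ω * p1 ω) := by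
    nlinarith [mul_nonneg (ha2r ω).1 (sub_nonneg.2 hYV),
      mul_nonneg (mul_nonneg (ha1r ω).1 (mul_nonneg (hg21n ω) (hp1n ω)))
        (mul_nonneg (ha2r ω).1 (mul_nonneg (hg12n ω) (hp2n ω)))]
  have hpos : (0:ℝ) ≤ 1 + g11 ω * p1 ω + g12 ω * p2 ω := by
    nlinarith [mul_nonneg (hg11n ω) (hp1n ω), mul_nonneg (hg12n ω) (hp2n ω)]
  nlinarith [mul_le_mul_of_nonneg_left hsub hpos]

/-- For a uniformly strong ergodic fading IFC (`g12 ≥ g22` and `g21 ≥ g11` a.e.),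
for every power-split policy `(α1, α2)`,
`min_{j∈{1,…,6}} S_j(α,p) ≤ min_{j∈{1,…,6}} S_j(0,p) = min(S1(0,p), S2(0,p), S3(0,p))`:
the Han–Kobayashi sum-rate bound with joint coding across all fading states is maximized by
transmitting only common messages at both users. -/
theorem stmt3 (μ : Measure Ω) [IsProbabilityMeasure μ]
    (g11 g12 g21 g22 p1 p2 : Ω → ℝ)
    (hg11 : Measurable g11) (hg12 : Measurable g12)
    (hg21 : Measurable g21) (hg22 : Measurable g22)
    (hp1 : Measurable p1) (hp2 : Measurable p2)
    (hg11n : ∀ ω, 0 ≤ g11 ω) (hg12n : ∀ ω, 0 ≤ g12 ω)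
    (hg21n : ∀ ω, 0 ≤ g21 ω) (hg22n : ∀ ω, 0 ≤ g22 ω)
    (hp1n : ∀ ω, 0 ≤ p1 ω) (hp2n : ∀ ω, 0 ≤ p2 ω)
    (hUS1 : ∀ᵐ ω ∂μ, g22 ω ≤ g12 ω) (hUS2 : ∀ᵐ ω ∂μ, g11 ω ≤ g21 ω)
    (hI1 : Integrable (fun ω => C (g11 ω * p1 ω + g12 ω * p2 ω)) μ)
    (hI2 : Integrable (fun ω => C (g21 ω * p1 ω + g22 ω * p2 ω)) μ)
    (a1 a2 : Ω → ℝ) (ha1 : Measurable a1) (ha2 : Measurable a2)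
    (ha1r : ∀ ω, a1 ω ∈ Set.Icc (0 : ℝ) 1) (ha2r : ∀ ω, a2 ω ∈ Set.Icc (0 : ℝ) 1) :
    minS μ g11 g12 g21 g22 p1 p2 a1 a2 ≤ minS μ g11 g12 g21 g22 p1 p2 0 0
    ∧ minS μ g11 g12 g21 g22 p1 p2 0 0
        = min (S1 μ g11 g12 g21 g22 p1 p2 0 0)
            (min (S2 μ g11 g12 g21 g22 p1 p2 0 0) (S3 μ g11 g12 g21 g22 p1 p2 0 0)) := by
  have hXn : ∀ ω, (0:ℝ) ≤ g11 ω * p1 ω := fun ω => mul_nonneg (hg11n ω) (hp1n ω)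
  have hVn : ∀ ω, (0:ℝ) ≤ g12 ω * p2 ω := fun ω => mul_nonneg (hg12n ω) (hp2n ω)
  have hUn : ∀ ω, (0:ℝ) ≤ g21 ω * p1 ω := fun ω => mul_nonneg (hg21n ω) (hp1n ω)
  have hYn : ∀ ω, (0:ℝ) ≤ g22 ω * p2 ω := fun ω => mul_nonneg (hg22n ω) (hp2n ω)
  have hI2' : Integrable (fun ω => C (g22 ω * p2 ω + g21 ω * p1 ω)) μ := by
    simpa [add_comm] using hI2
  have hICX : Integrable (fun ω => C (g11 ω * p1 ω)) μ :=
    integrable_C_of_le (by fun_prop) (ae_of_all _ hXn)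
      (ae_of_all _ fun ω => le_add_of_nonneg_right (hVn ω)) hI1
  have hICY : Integrable (fun ω => C (g22 ω * p2 ω)) μ :=
    integrable_C_of_le (by fun_prop) (ae_of_all _ hYn)
      (ae_of_all _ fun ω => le_add_of_nonneg_left (hUn ω)) hI2
  have hICU : Integrable (fun ω => C (g21 ω * p1 ω)) μ :=
    integrable_C_of_le (by fun_prop) (ae_of_all _ hUn)
      (ae_of_all _ fun ω => le_add_of_nonneg_right (hYn ω)) hI2
  have hICV : Integrable (fun ω => C (g12 ω * p2 ω)) μ :=
    integrable_C_of_le (by fun_prop) (ae_of_all _ hVn)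
      (ae_of_all _ fun ω => le_add_of_nonneg_left (hXn ω)) hI1
  have hXU : ∫ ω, C (g11 ω * p1 ω) ∂μ ≤ ∫ ω, C (g21 ω * p1 ω) ∂μ :=
    int_C_mono (ae_of_all _ hXn)
      (hUS2.mono fun ω h => mul_le_mul_of_nonneg_right h (hp1n ω)) hICU
  have hYV : ∫ ω, C (g22 ω * p2 ω) ∂μ ≤ ∫ ω, C (g12 ω * p2 ω) ∂μ :=
    int_C_mono (ae_of_all _ hYn)
      (hUS1.mono fun ω h => mul_le_mul_of_nonneg_right h (hp2n ω)) hICV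
  -- values at the zero policy
  have hS1z : S1 μ g11 g12 g21 g22 p1 p2 0 0
      = (∫ ω, C (g11 ω * p1 ω) ∂μ) + ∫ ω, C (g22 ω * p2 ω) ∂μ := by
    simp [S1]
  have hS2z : S2 μ g11 g12 g21 g22 p1 p2 0 0
      = ∫ ω, C (g11 ω * p1 ω + g12 ω * p2 ω) ∂μ := by
    simp [S2, C_zero]
  have hS3z : S3 μ g11 g12 g21 g22 p1 p2 0 0
      = ∫ ω, C (g22 ω * p2 ω + g21 ω * p1 ω) ∂μ := by
    simp [S3, S2, C_zero]
  have hS4z : S4 μ g11 g12 g21 g22 p1 p2 0 0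
      = (∫ ω, C (g12 ω * p2 ω) ∂μ) + ∫ ω, C (g21 ω * p1 ω) ∂μ := by
    simp [S4]
  have hS5z : S5 μ g11 g12 g21 g22 p1 p2 0 0
      = ((∫ ω, C (g11 ω * p1 ω + g12 ω * p2 ω) ∂μ)
          + (∫ ω, C (g21 ω * p1 ω) ∂μ) + ∫ ω, C (g22 ω * p2 ω) ∂μ) / 2 := by
    simp [S5, C_zero]
  have hS6z : S6 μ g11 g12 g21 g22 p1 p2 0 0
      = ((∫ ω, C (g22 ω * p2 ω + g21 ω * p1 ω) ∂μ)
          + (∫ ω, C (g12 ω * p2 ω) ∂μ) + ∫ ω, C (g11 ω * p1 ω) ∂μ) / 2 := by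
    simp [S6, S5, C_zero]
  set m3 := min (S1 μ g11 g12 g21 g22 p1 p2 0 0)
      (min (S2 μ g11 g12 g21 g22 p1 p2 0 0) (S3 μ g11 g12 g21 g22 p1 p2 0 0)) with hm3def
  have hm1 : m3 ≤ S1 μ g11 g12 g21 g22 p1 p2 0 0 := min_le_left _ _
  have hm2 : m3 ≤ S2 μ g11 g12 g21 g22 p1 p2 0 0 :=
    le_trans (min_le_right _ _) (min_le_left _ _)
  have hm3 : m3 ≤ S3 μ g11 g12 g21 g22 p1 p2 0 0 :=
    le_trans (min_le_right _ _) (min_le_right _ _)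
  have h4 : m3 ≤ S4 μ g11 g12 g21 g22 p1 p2 0 0 := by
    rw [hS4z]; rw [hS1z] at hm1; linarith
  have h5 : m3 ≤ S5 μ g11 g12 g21 g22 p1 p2 0 0 := by
    rw [hS5z]; rw [hS1z] at hm1; rw [hS2z] at hm2; linarith
  have h6 : m3 ≤ S6 μ g11 g12 g21 g22 p1 p2 0 0 := by
    rw [hS6z]; rw [hS1z] at hm1; rw [hS3z] at hm3; linarith
  have heq : minS μ g11 g12 g21 g22 p1 p2 0 0 = m3 := by
    unfold minS
    refine le_antisymm ?_ ?_
    · exact le_min (min_le_left _ _) (le_min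
        (le_trans (min_le_right _ _) (min_le_left _ _))
        (le_trans (min_le_right _ _) (le_trans (min_le_right _ _) (min_le_left _ _))))
    · exact le_min hm1 (le_min hm2 (le_min hm3 (le_min h4 (le_min h5 h6))))
  -- the inequalities at a general power split
  have hA1 : S1 μ g11 g12 g21 g22 p1 p2 a1 a2 ≤ S1 μ g11 g12 g21 g22 p1 p2 0 0 := by
    rw [hS1z]
    refine add_le_add ?_ ?_
    · exact int_C_shrink hXn
        (fun ω => mul_nonneg (mul_nonneg (ha2r ω).1 (hg12n ω)) (hp2n ω)) hICX
    · exact int_C_shrink hYn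
        (fun ω => mul_nonneg (mul_nonneg (ha1r ω).1 (hg21n ω)) (hp1n ω)) hICY
  have hA2 : S2 μ g11 g12 g21 g22 p1 p2 a1 a2 ≤ S2 μ g11 g12 g21 g22 p1 p2 0 0 :=
    S2_le μ g11 g12 g21 g22 p1 p2 hg11 hg12 hg21 hg22 hp1 hp2
      hg11n hg12n hg21n hg22n hp1n hp2n hUS1 hI1 a1 a2 ha1 ha2 ha1r ha2r
  have hA3 : S3 μ g11 g12 g21 g22 p1 p2 a1 a2 ≤ S3 μ g11 g12 g21 g22 p1 p2 0 0 :=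
    S2_le μ g22 g21 g12 g11 p2 p1 hg22 hg21 hg12 hg11 hp2 hp1
      hg22n hg21n hg12n hg11n hp2n hp1n hUS2 hI2' a2 a1 ha2 ha1 ha2r ha1r
  refine ⟨?_, heq⟩
  rw [heq]
  have : minS μ g11 g12 g21 g22 p1 p2 a1 a2 ≤ S1 μ g11 g12 g21 g22 p1 p2 a1 a2 :=
    min_le_left _ _
  have h2' : minS μ g11 g12 g21 g22 p1 p2 a1 a2 ≤ S2 μ g11 g12 g21 g22 p1 p2 a1 a2 :=
    le_trans (min_le_right _ _) (min_le_left _ _)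
  have h3' : minS μ g11 g12 g21 g22 p1 p2 a1 a2 ≤ S3 μ g11 g12 g21 g22 p1 p2 a1 a2 :=
    le_trans (min_le_right _ _) (le_trans (min_le_right _ _) (min_le_left _ _))
  exact le_min (this.trans hA1) (le_min (h2'.trans hA2) (h3'.trans hA3))
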